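/- Let F be a finite field with exactly q elements and let n, s be natural numbers with s+1 ≤ n ≤ char(F). Then for every finite set T of right vertices of the KT graph, the inequality 2q·|Γ_R(T)| ≥ 2q·q^{n−(s+1)}·|T| − (q−1)·q^{max(n−(2s+2), 0)}·|T|² holds (as an inequality of integers). In particular, for 0 < δ < 1, every set T of right vertices of size at most δ·q^{s+1} satisfies |Γ_R(T)| ≥ (1 − ε)·q^{n−(s+1)}·|T| with ε = (δ·(q−1)/(2q))·q^{max(2s+2−n, 0)}. -/

import Mathlib

set_option linter.unusedSectionVars false
set_option maxHeartbeats 2000000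

open Polynomial

/-- The adjacency relation of the KT graph. -/
def KTAdj {F : Type*} [Field F] (s : ℕ) (f : F[X]) (w : F × (Fin (s + 1) → F)) : Prop :=
  ∀ j : Fin (s + 1), (Polynomial.derivative^[(j : ℕ)] f).eval w.1 = w.2 j

section auxKT
variable {F : Type*} [Field F] [Fintype F]

variable {F : Type*} [Field F] [Fintype F]

lemma degLT_set_eq (m : ℕ) : {f : F[X] | f.degree < (m : ℕ)} = ↑(Polynomial.degreeLT F m) := by
  ext f; simp [Polynomial.mem_degreeLT]

lemma degLT_finite (m : ℕ) : {f : F[X] | f.degree < (m : ℕ)}.Finite := by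
  rw [degLT_set_eq]
  have : Finite (Polynomial.degreeLT F m) :=
    Finite.of_equiv _ (Polynomial.degreeLTEquiv F m).toEquiv.symm
  exact Set.toFinite _

lemma ncard_degLT (m : ℕ) :
    {f : F[X] | f.degree < (m : ℕ)}.ncard = Fintype.card F ^ m := by
  rw [degLT_set_eq, ← Nat.card_coe_set_eq]
  have h1 : Nat.card (Polynomial.degreeLT F m) = Nat.card (Fin m → F) :=
    Nat.card_congr (Polynomial.degreeLTEquiv F m).toEquiv
  rw [show Nat.card ↑(Polynomial.degreeLT F m : Set F[X]) = Nat.card (Polynomial.degreeLT F m) from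
    Nat.card_congr (Equiv.setCongr rfl), h1, Nat.card_fun]
  simp [Nat.card_eq_fintype_card]

lemma cast_factorial_ne_zero {m : ℕ} (hm : m < ringChar F) : (m.factorial : F) ≠ 0 := by
  have hp : (ringChar F).Prime := CharP.char_is_prime F (ringChar F)
  rw [Ne, CharP.cast_eq_zero_iff F (ringChar F)]
  intro hdvd
  exact absurd ((Nat.Prime.dvd_factorial hp).mp hdvd) (not_le.mpr hm)

lemma iter_deriv_eval (f : F[X]) (y : F) (j : ℕ) :
    (Polynomial.derivative^[j] f).eval y = (j.factorial : F) * (Polynomial.taylor y f).coeff j := by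
  rw [Polynomial.taylor_coeff, ← Polynomial.factorial_smul_hasseDeriv]
  simp [Polynomial.eval_smul, nsmul_eq_mul]

/-- If all derivatives up to order s vanish at y, then (X - C y)^(s+1) divides g. -/
lemma pow_X_sub_C_dvd_of_derivs {s : ℕ} (hs : s < ringChar F) (g : F[X]) (y : F)
    (h : ∀ j : ℕ, j ≤ s → (Polynomial.derivative^[j] g).eval y = 0) :
    (X - C y) ^ (s + 1) ∣ g := by
  have hcoeff : ∀ j < s + 1, (Polynomial.taylor y g).coeff j = 0 := by
    intro j hj
    have hj' : j ≤ s := Nat.lt_succ_iff.mp hj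
    have := h j hj'
    rw [iter_deriv_eval g y j] at this
    have hfac : (j.factorial : F) ≠ 0 := cast_factorial_ne_zero (lt_of_le_of_lt hj' hs)
    exact (mul_eq_zero.mp this).resolve_left hfac
  obtain ⟨u, hu⟩ := Polynomial.X_pow_dvd_iff.mpr hcoeff
  have hg : g = Polynomial.taylor (-y) (X ^ (s + 1) * u) := by
    rw [← hu, Polynomial.taylor_taylor]
    simp [Polynomial.taylor_zero]
  rw [hg, Polynomial.taylor_mul]
  have hX : ((Polynomial.taylor (-y)) (X ^ (s+1)) : F[X]) = (X - C y) ^ (s+1) := by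
    rw [show ((Polynomial.taylor (-y)) (X ^ (s+1)) : F[X]) = (Polynomial.taylor (-y) X) ^ (s+1) by
      simp [Polynomial.taylor_apply, Polynomial.pow_comp]]
    rw [Polynomial.taylor_X, map_neg, sub_eq_add_neg]
  rw [hX]
  exact Dvd.intro _ rfl

lemma myTaylor_injective (y : F) : Function.Injective (⇑(Polynomial.taylor y) : F[X] → F[X]) := by
  intro a b hab
  have := congrArg (⇑(Polynomial.taylor (-y))) hab
  simpa [Polynomial.taylor_taylor] using this

lemma degree_taylor (y : F) (f : F[X]) : ((Polynomial.taylor y) f).degree = f.degree := by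
  rcases eq_or_ne f 0 with rfl | hf
  · simp
  · have h1 : (Polynomial.taylor y) f ≠ 0 := by
      intro h
      exact hf (myTaylor_injective y (by simpa using h))
    rw [Polynomial.degree_eq_natDegree hf, Polynomial.degree_eq_natDegree h1,
      Polynomial.natDegree_taylor]

lemma ncard_nbhd {n s : ℕ} (hsn : s + 1 ≤ n) (hchar : n ≤ ringChar F)
    (w : F × (Fin (s + 1) → F)) :
    {f : F[X] | f.degree < (n : ℕ) ∧ KTAdj s f w}.ncard = Fintype.card F ^ (n - (s + 1)) := by
  obtain ⟨y, z⟩ := w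
  have hfac : ∀ j : Fin (s + 1), (((j : ℕ)).factorial : F) ≠ 0 := fun j =>
    cast_factorial_ne_zero (lt_of_lt_of_le (lt_of_lt_of_le j.2 hsn) hchar)
  set c : Fin (s + 1) → F := fun j => (((j : ℕ)).factorial : F)⁻¹ * z j with hc
  set A : Set F[X] := {G | G.degree < (n : ℕ) ∧ ∀ j : Fin (s + 1), G.coeff j = c j} with hA
  have hKT : ∀ f : F[X], KTAdj s f (y, z) ↔
      ∀ j : Fin (s + 1), ((Polynomial.taylor y) f).coeff j = c j := by
    intro f
    unfold KTAdj
    refine forall_congr' fun j => ?_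
    rw [iter_deriv_eval f y j]
    constructor
    · intro h
      have h' : ((j : ℕ).factorial : F) * ((Polynomial.taylor y) f).coeff j = z j := h
      rw [hc]
      simp only
      rw [← h', ← mul_assoc, inv_mul_cancel₀ (hfac j), one_mul]
    · intro h
      show ((j : ℕ).factorial : F) * ((Polynomial.taylor y) f).coeff j = z j
      rw [h, hc]
      simp only
      rw [← mul_assoc, mul_inv_cancel₀ (hfac j), one_mul]
  -- step 1: image under taylor y
  have himg : (⇑(Polynomial.taylor y)) '' {f : F[X] | f.degree < (n : ℕ) ∧ KTAdj s f (y, z)} = A := by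
    ext G
    constructor
    · rintro ⟨f, ⟨hdf, hadj⟩, rfl⟩
      exact ⟨by rwa [_root_.degree_taylor], (hKT f).mp hadj⟩
    · rintro ⟨hdG, hcG⟩
      refine ⟨(Polynomial.taylor (-y)) G, ⟨?_, ?_⟩, ?_⟩
      · rwa [_root_.degree_taylor]
      · rw [hKT]
        simpa [Polynomial.taylor_taylor] using hcG
      · simp [Polynomial.taylor_taylor]
  have h1 : {f : F[X] | f.degree < (n : ℕ) ∧ KTAdj s f (y, z)}.ncard = A.ncard := by
    rw [← himg, Set.ncard_image_of_injective _ (myTaylor_injective y)]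
  rw [h1]
  -- step 2: count A
  set P0 : F[X] := ∑ j : Fin (s + 1), Polynomial.monomial (j : ℕ) (c j) with hP0def
  have hP0 : ∀ k : ℕ, P0.coeff k = if hk : k < s + 1 then c ⟨k, hk⟩ else 0 := by
    intro k
    rw [hP0def, Polynomial.finset_sum_coeff]
    split
    · next hk =>
      rw [Finset.sum_eq_single (⟨k, hk⟩ : Fin (s + 1))]
      · simp [Polynomial.coeff_monomial]
      · intro j _ hj
        rw [Polynomial.coeff_monomial]
        rw [if_neg]
        intro h
        exact hj (Fin.ext h)
      · simp
    · next hk =>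
      apply Finset.sum_eq_zero
      intro j _
      rw [Polynomial.coeff_monomial, if_neg]
      intro h
      exact hk (h ▸ j.2)
  set φ : F[X] → F[X] := fun H => H * X ^ (s + 1) + P0 with hφ
  have hinj : Function.Injective φ := by
    intro a b hab
    simp only [hφ] at hab
    have := add_right_cancel hab
    exact mul_right_cancel₀ (pow_ne_zero _ Polynomial.X_ne_zero) this
  have himg2 : φ '' {H : F[X] | H.degree < ((n - (s + 1) : ℕ) : ℕ)} = A := by
    ext G
    constructor
    · rintro ⟨H, hH, rfl⟩
      simp only [Set.mem_setOf_eq] at hH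
      constructor
      · rw [Polynomial.degree_lt_iff_coeff_zero]
        intro m hm
        have hm' : n ≤ m := hm
        simp only [hφ, Polynomial.coeff_add, Polynomial.coeff_mul_X_pow']
        rw [if_pos (by omega), hP0, dif_neg (by omega)]
        have := (Polynomial.degree_lt_iff_coeff_zero H (n - (s + 1))).mp hH (m - (s + 1))
          (by omega)
        rw [this, add_zero]
      · intro j
        simp only [hφ, Polynomial.coeff_add, Polynomial.coeff_mul_X_pow']
        rw [if_neg (by omega), hP0, dif_pos j.2]
        simp
    · rintro ⟨hdG, hcG⟩
      have hdvd : (X : F[X]) ^ (s + 1) ∣ (G - P0) := by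
        rw [Polynomial.X_pow_dvd_iff]
        intro d hd
        rw [Polynomial.coeff_sub, hP0, dif_pos hd]
        have := hcG ⟨d, hd⟩
        simp only [Fin.val_mk] at this
        rw [this]
        exact sub_self _
      obtain ⟨H, hH⟩ := hdvd
      refine ⟨H, ?_, ?_⟩
      · simp only [Set.mem_setOf_eq]
        rw [Polynomial.degree_lt_iff_coeff_zero]
        intro m hm
        have hm' : n - (s + 1) ≤ m := hm
        have h2 : H.coeff m = (G - P0).coeff (m + (s + 1)) := by
          rw [hH, Polynomial.coeff_X_pow_mul]
        rw [h2, Polynomial.coeff_sub, hP0, dif_neg (by omega)]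
        have hG0 : G.coeff (m + (s + 1)) = 0 :=
          (Polynomial.degree_lt_iff_coeff_zero G n).mp hdG _ (by omega)
        rw [hG0]
        exact sub_self _
      · simp only [hφ]
        rw [mul_comm, ← hH]
        ring
  have h2 : A.ncard = Fintype.card F ^ (n - (s + 1)) := by
    rw [← himg2, Set.ncard_image_of_injective _ hinj, ncard_degLT]
  exact h2

lemma nbhd_disjoint {n s : ℕ} {w w' : F × (Fin (s + 1) → F)} (hy : w.1 = w'.1) (hne : w ≠ w') :
    {f : F[X] | f.degree < (n : ℕ) ∧ KTAdj s f w} ∩ {f : F[X] | f.degree < (n : ℕ) ∧ KTAdj s f w'}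
      = ∅ := by
  ext f
  simp only [Set.mem_inter_iff, Set.mem_setOf_eq, Set.mem_empty_iff_false, iff_false]
  rintro ⟨⟨-, h1⟩, ⟨-, h2⟩⟩
  apply hne
  have hz : w.2 = w'.2 := by
    funext j
    rw [← h1 j, hy, h2 j]
  exact Prod.ext hy hz

lemma nbhd_inter_card {n s : ℕ} (hsn : s + 1 ≤ n) (hchar : n ≤ ringChar F)
    {w w' : F × (Fin (s + 1) → F)} (hy : w.1 ≠ w'.1) :
    ({f : F[X] | f.degree < (n : ℕ) ∧ KTAdj s f w} ∩
      {f : F[X] | f.degree < (n : ℕ) ∧ KTAdj s f w'}).ncard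
      ≤ Fintype.card F ^ (n - (2 * s + 2)) := by
  set I := {f : F[X] | f.degree < (n : ℕ) ∧ KTAdj s f w} ∩
      {f : F[X] | f.degree < (n : ℕ) ∧ KTAdj s f w'} with hI
  rcases Set.eq_empty_or_nonempty I with hIe | ⟨f₀, hf₀⟩
  · rw [hIe]; simp
  have hs : s < ringChar F := by omega
  set D : F[X] := (X - C w.1) ^ (s + 1) * (X - C w'.1) ^ (s + 1) with hD
  have hDmonic : D.Monic := ((monic_X_sub_C w.1).pow _).mul ((monic_X_sub_C w'.1).pow _)
  have hDdeg : D.natDegree = 2 * s + 2 := by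
    rw [hD, Polynomial.natDegree_mul (((monic_X_sub_C w.1).pow _).ne_zero)
      (((monic_X_sub_C w'.1).pow _).ne_zero), Polynomial.natDegree_pow,
      Polynomial.natDegree_pow]
    simp [Polynomial.natDegree_X_sub_C]
    ring
  have hdvd : ∀ f ∈ I, D ∣ (f - f₀) := by
    intro f hf
    obtain ⟨⟨hdf, ha⟩, ⟨-, hb⟩⟩ := hf
    obtain ⟨⟨hdf₀, ha₀⟩, ⟨-, hb₀⟩⟩ := hf₀
    have d1 : (X - C w.1) ^ (s + 1) ∣ (f - f₀) := by
      apply pow_X_sub_C_dvd_of_derivs hs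
      intro j hj
      rw [Polynomial.iterate_derivative_sub, Polynomial.eval_sub,
        ha ⟨j, by omega⟩, ha₀ ⟨j, by omega⟩, sub_self]
    have d2 : (X - C w'.1) ^ (s + 1) ∣ (f - f₀) := by
      apply pow_X_sub_C_dvd_of_derivs hs
      intro j hj
      rw [Polynomial.iterate_derivative_sub, Polynomial.eval_sub,
        hb ⟨j, by omega⟩, hb₀ ⟨j, by omega⟩, sub_self]
    have hcop : IsCoprime ((X - C w.1) ^ (s + 1)) ((X - C w'.1) ^ (s + 1) : F[X]) :=
      (Polynomial.isCoprime_X_sub_C_of_isUnit_sub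
        ((sub_ne_zero.mpr hy).isUnit)).pow
    exact hcop.mul_dvd d1 d2
  have heq : ∀ f ∈ I, f - f₀ = D * ((f - f₀) /ₘ D) := by
    intro f hf
    conv_lhs => rw [← Polynomial.modByMonic_add_div (f - f₀) D]
    rw [(Polynomial.modByMonic_eq_zero_iff_dvd hDmonic).mpr (hdvd f hf), zero_add]
  have hmaps : ∀ f ∈ I, (f - f₀) /ₘ D ∈ {h : F[X] | h.degree < ((n - (2 * s + 2) : ℕ) : ℕ)} := by
    intro f hf
    set h := (f - f₀) /ₘ D with hh
    rcases eq_or_ne h 0 with h0 | h0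
    · simp only [Set.mem_setOf_eq, h0, Polynomial.degree_zero]
      exact WithBot.bot_lt_coe _
    · have hfne : f - f₀ ≠ 0 := by
        rw [heq f hf]
        exact mul_ne_zero hDmonic.ne_zero h0
      have hdeg : (f - f₀).degree < (n : ℕ) := by
        obtain ⟨⟨hdf, -⟩, -⟩ := hf
        obtain ⟨⟨hdf₀, -⟩, -⟩ := hf₀
        exact lt_of_le_of_lt (Polynomial.degree_sub_le f f₀) (max_lt hdf hdf₀)
      rw [heq f hf, Polynomial.degree_mul, Polynomial.degree_eq_natDegree hDmonic.ne_zero,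
        Polynomial.degree_eq_natDegree h0, hDdeg] at hdeg
      rw [show ((2 * s + 2 : ℕ) : WithBot ℕ) + (h.natDegree : WithBot ℕ)
          = ((2 * s + 2 + h.natDegree : ℕ) : WithBot ℕ) by push_cast; ring] at hdeg
      rw [Nat.cast_lt] at hdeg
      simp only [Set.mem_setOf_eq]
      rw [Polynomial.degree_eq_natDegree h0, Nat.cast_lt]
      omega
  have hinj : Set.InjOn (fun f => (f - f₀) /ₘ D) I := by
    intro a ha b hb hab
    simp only at hab
    have : a - f₀ = b - f₀ := by rw [heq a ha, heq b hb, hab]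
    exact sub_left_injective this
  calc I.ncard ≤ {h : F[X] | h.degree < ((n - (2 * s + 2) : ℕ) : ℕ)}.ncard :=
        Set.ncard_le_ncard_of_injOn _ hmaps hinj (degLT_finite _)
    _ = Fintype.card F ^ (n - (2 * s + 2)) := ncard_degLT _

lemma main_count {n s : ℕ} (hsn : s + 1 ≤ n) (hchar : n ≤ ringChar F)
    (T : Set (F × (Fin (s + 1) → F))) :
    2 * (Fintype.card F : ℤ) * (Fintype.card F : ℤ) ^ (n - (s + 1)) * (T.ncard : ℤ) -
        ((Fintype.card F : ℤ) - 1) * (Fintype.card F : ℤ) ^ (n - (2 * s + 2)) * (T.ncard : ℤ) ^ 2 ≤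
      2 * (Fintype.card F : ℤ) *
        (Set.ncard {f : F[X] | f.degree < n ∧ ∃ w ∈ T, KTAdj s f w} : ℤ) := by
  classical
  set q := Fintype.card F with hq
  set e := n - (s + 1) with he
  set m := n - (2 * s + 2) with hm
  have hT : T.Finite := Set.toFinite T
  set Tf : Finset (F × (Fin (s + 1) → F)) := hT.toFinset with hTf
  have hTcard : T.ncard = Tf.card := Set.ncard_eq_toFinset_card T hT
  set Γs : Set F[X] := {f : F[X] | f.degree < n ∧ ∃ w ∈ T, KTAdj s f w} with hΓs
  have hΓfin : Γs.Finite := (degLT_finite n).subset (fun f hf => hf.1)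
  set Γf : Finset F[X] := hΓfin.toFinset with hΓf
  have hΓcard : Γs.ncard = Γf.card := Set.ncard_eq_toFinset_card Γs hΓfin
  set Ns : (F × (Fin (s + 1) → F)) → Set F[X] :=
    fun w => {f : F[X] | f.degree < (n : ℕ) ∧ KTAdj s f w} with hNs
  have hNfin : ∀ w, (Ns w).Finite := fun w => (degLT_finite n).subset (fun f hf => hf.1)
  set Nf : (F × (Fin (s + 1) → F)) → Finset F[X] := fun w => (hNfin w).toFinset with hNf
  have hNcard : ∀ w, (Nf w).card = q ^ e := by
    intro w
    rw [hNf]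
    rw [← Set.ncard_eq_toFinset_card _ (hNfin w)]
    exact ncard_nbhd hsn hchar w
  -- N w as a filter of Γf, for w ∈ Tf
  have hfilter : ∀ w ∈ Tf, Nf w = Γf.filter (fun f => KTAdj s f w) := by
    intro w hw
    have hwT : w ∈ T := (Set.Finite.mem_toFinset hT).mp hw
    ext f
    simp only [hNf, hΓf, Set.Finite.mem_toFinset, Finset.mem_filter, hNs, hΓs,
      Set.mem_setOf_eq]
    constructor
    · rintro ⟨h1, h2⟩; exact ⟨⟨h1, ⟨w, hwT, h2⟩⟩, h2⟩
    · rintro ⟨⟨h1, -⟩, h2⟩; exact ⟨h1, h2⟩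
  set d : F[X] → ℕ := fun f => (Tf.filter (fun w => KTAdj s f w)).card with hd
  -- double counting
  have sum1 : ∑ w ∈ Tf, (Nf w).card = ∑ f ∈ Γf, d f := by
    calc ∑ w ∈ Tf, (Nf w).card
        = ∑ w ∈ Tf, ∑ f ∈ Γf, (if KTAdj s f w then 1 else 0) := by
          refine Finset.sum_congr rfl fun w hw => ?_
          rw [hfilter w hw, Finset.card_filter]
      _ = ∑ f ∈ Γf, ∑ w ∈ Tf, (if KTAdj s f w then 1 else 0) := Finset.sum_comm
      _ = ∑ f ∈ Γf, d f := by
          refine Finset.sum_congr rfl fun f _ => ?_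
          rw [hd]
          exact (Finset.card_filter _ _).symm
  have sum1' : Tf.card * q ^ e = ∑ f ∈ Γf, d f := by
    rw [← sum1]
    rw [Finset.sum_congr rfl (fun w _ => hNcard w), Finset.sum_const, smul_eq_mul]
  have hd1 : ∀ f ∈ Γf, 1 ≤ d f := by
    intro f hf
    rw [hΓf, Set.Finite.mem_toFinset] at hf
    obtain ⟨-, w, hwT, hadj⟩ := hf
    have : w ∈ Tf.filter (fun w => KTAdj s f w) := by
      rw [Finset.mem_filter]
      exact ⟨(Set.Finite.mem_toFinset hT).mpr hwT, hadj⟩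
    exact Finset.card_pos.mpr ⟨w, this⟩
  have step2 : 2 * ∑ f ∈ Γf, d f ≤ 2 * Γf.card + ∑ f ∈ Γf, (d f * d f - d f) := by
    have key : ∀ f ∈ Γf, 2 * d f ≤ 2 + (d f * d f - d f) := by
      intro f hf
      have h1 := hd1 f hf
      rcases Nat.exists_eq_add_of_le h1 with ⟨k, hk⟩
      rw [hk]
      have h2 : (1 + k) * (1 + k) = (1 + k) * k + (1 + k) := by ring
      have h3 : 2 * k ≤ (1 + k) * k := by
        cases k with
        | zero => simp
        | succ k2 => exact mul_le_mul_left (by omega) (k2 + 1)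
      omega
    calc 2 * ∑ f ∈ Γf, d f = ∑ f ∈ Γf, 2 * d f := by rw [Finset.mul_sum]
      _ ≤ ∑ f ∈ Γf, (2 + (d f * d f - d f)) := Finset.sum_le_sum key
      _ = 2 * Γf.card + ∑ f ∈ Γf, (d f * d f - d f) := by
          rw [Finset.sum_add_distrib, Finset.sum_const, smul_eq_mul, mul_comm]
  -- off-diagonal pair counting
  have step3 : ∑ f ∈ Γf, (d f * d f - d f)
      = ∑ p ∈ Tf.offDiag, (Γf.filter (fun f => KTAdj s f p.1 ∧ KTAdj s f p.2)).card := by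
    have hoff : ∀ f : F[X],
        (Tf.filter (fun w => KTAdj s f w)).offDiag
          = Tf.offDiag.filter (fun p => KTAdj s f p.1 ∧ KTAdj s f p.2) := by
      intro f
      ext p
      simp only [Finset.mem_offDiag, Finset.mem_filter]
      tauto
    calc ∑ f ∈ Γf, (d f * d f - d f)
        = ∑ f ∈ Γf, (Tf.filter (fun w => KTAdj s f w)).offDiag.card := by
          refine Finset.sum_congr rfl fun f _ => ?_
          rw [Finset.offDiag_card]
      _ = ∑ f ∈ Γf, ∑ p ∈ Tf.offDiag, (if KTAdj s f p.1 ∧ KTAdj s f p.2 then 1 else 0) := by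
          refine Finset.sum_congr rfl fun f _ => ?_
          rw [hoff f, Finset.card_filter]
      _ = ∑ p ∈ Tf.offDiag, ∑ f ∈ Γf, (if KTAdj s f p.1 ∧ KTAdj s f p.2 then 1 else 0) :=
          Finset.sum_comm
      _ = ∑ p ∈ Tf.offDiag, (Γf.filter (fun f => KTAdj s f p.1 ∧ KTAdj s f p.2)).card := by
          refine Finset.sum_congr rfl fun p _ => (Finset.card_filter _ _).symm
  have step4 : ∀ p ∈ Tf.offDiag,
      (Γf.filter (fun f => KTAdj s f p.1 ∧ KTAdj s f p.2)).card
        ≤ if p.1.1 = p.2.1 then 0 else q ^ m := by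
    intro p hp
    rw [Finset.mem_offDiag] at hp
    obtain ⟨hp1, hp2, hpne⟩ := hp
    have hIfin : (Ns p.1 ∩ Ns p.2).Finite := ((hNfin p.1).subset Set.inter_subset_left)
    have hsub : Γf.filter (fun f => KTAdj s f p.1 ∧ KTAdj s f p.2) ⊆ hIfin.toFinset := by
      intro f hf
      rw [Finset.mem_filter] at hf
      obtain ⟨hfΓ, ha1, ha2⟩ := hf
      rw [hΓf, Set.Finite.mem_toFinset] at hfΓ
      rw [Set.Finite.mem_toFinset]
      exact ⟨⟨hfΓ.1, ha1⟩, ⟨hfΓ.1, ha2⟩⟩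
    have hcard : (Γf.filter (fun f => KTAdj s f p.1 ∧ KTAdj s f p.2)).card
        ≤ (Ns p.1 ∩ Ns p.2).ncard := by
      rw [Set.ncard_eq_toFinset_card _ hIfin]
      exact Finset.card_le_card hsub
    by_cases hy : p.1.1 = p.2.1
    · rw [if_pos hy]
      have := nbhd_disjoint (n := n) hy hpne
      rw [hNs] at hcard
      rw [this] at hcard
      simpa using hcard
    · rw [if_neg hy]
      exact le_trans hcard (nbhd_inter_card hsn hchar hy)
  set Podd : ℕ := (Tf.offDiag.filter (fun p => ¬ p.1.1 = p.2.1)).card with hPodd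
  have step5 : ∑ p ∈ Tf.offDiag, (Γf.filter (fun f => KTAdj s f p.1 ∧ KTAdj s f p.2)).card
      ≤ q ^ m * Podd := by
    calc ∑ p ∈ Tf.offDiag, (Γf.filter (fun f => KTAdj s f p.1 ∧ KTAdj s f p.2)).card
        ≤ ∑ p ∈ Tf.offDiag, (if p.1.1 = p.2.1 then 0 else q ^ m) := Finset.sum_le_sum step4
      _ = q ^ m * Podd := by
          rw [Finset.sum_ite, Finset.sum_const, Finset.sum_const, smul_eq_mul, smul_eq_mul]
          rw [hPodd]
          ring
  set P : ℕ := ((Tf ×ˢ Tf).filter (fun p => ¬ p.1.1 = p.2.1)).card with hP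
  have hPoddP : Podd ≤ P := by
    apply Finset.card_le_card
    apply Finset.filter_subset_filter
    intro p hp
    rw [Finset.mem_offDiag] at hp
    rw [Finset.mem_product]
    exact ⟨hp.1, hp.2.1⟩
  -- Cauchy-Schwarz over fibers
  set count : F → ℕ := fun y => (Tf.filter (fun w => w.1 = y)).card with hcount
  have j1 : ∑ y ∈ Finset.univ, count y = Tf.card :=
    (Finset.card_eq_sum_card_fiberwise (fun w _ => Finset.mem_univ w.1)).symm
  have j2 : ((Tf ×ˢ Tf).filter (fun p => p.1.1 = p.2.1)).card
      = ∑ y ∈ Finset.univ, count y * count y := by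
    rw [Finset.card_eq_sum_card_fiberwise
      (f := fun p => p.1.1) (t := Finset.univ) (fun p _ => Finset.mem_univ _)]
    refine Finset.sum_congr rfl fun y _ => ?_
    have : ((Tf ×ˢ Tf).filter (fun p => p.1.1 = p.2.1)).filter (fun p => p.1.1 = y)
        = (Tf.filter (fun w => w.1 = y)) ×ˢ (Tf.filter (fun w => w.1 = y)) := by
      ext p
      simp only [Finset.mem_filter, Finset.mem_product]
      constructor
      · rintro ⟨⟨⟨m1, m2⟩, heq⟩, hy⟩
        exact ⟨⟨m1, hy⟩, ⟨m2, by rw [← heq]; exact hy⟩⟩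
      · rintro ⟨⟨m1, hy1⟩, ⟨m2, hy2⟩⟩
        exact ⟨⟨⟨m1, m2⟩, by rw [hy1, hy2]⟩, hy1⟩
    rw [this, Finset.card_product]
  have j3 : P + ∑ y ∈ Finset.univ, count y * count y = Tf.card * Tf.card := by
    rw [← j2, ← Finset.card_product Tf Tf]
    rw [add_comm]
    exact Finset.card_filter_add_card_filter_not _
  have j4 : (Tf.card : ℤ) ^ 2 ≤ (q : ℤ) * ∑ y ∈ Finset.univ, (count y : ℤ) ^ 2 := by
    have := sq_sum_le_card_mul_sum_sq (s := (Finset.univ : Finset F))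
      (f := fun y => (count y : ℤ))
    rw [Finset.card_univ] at this
    calc (Tf.card : ℤ) ^ 2 = (∑ y ∈ Finset.univ, (count y : ℤ)) ^ 2 := by
          rw [← j1]; push_cast; ring
      _ ≤ (q : ℤ) * ∑ y ∈ Finset.univ, (count y : ℤ) ^ 2 := by exact_mod_cast this
  have j5 : (q : ℤ) * P ≤ ((q : ℤ) - 1) * (Tf.card : ℤ) ^ 2 := by
    have h3 : (P : ℤ) + ∑ y ∈ Finset.univ, (count y : ℤ) ^ 2 = (Tf.card : ℤ) ^ 2 := by
      have h := congrArg (Nat.cast : ℕ → ℤ) j3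
      push_cast at h
      simpa [sq] using h
    nlinarith [j4, sq_nonneg ((Tf.card : ℤ))]
  -- final assembly over ℤ
  have castA : ((∑ f ∈ Γf, (d f * d f - d f) : ℕ) : ℤ) ≤ (q : ℤ) ^ m * P := by
    exact_mod_cast le_trans (step3 ▸ step5) (Nat.mul_le_mul_left _ hPoddP)
  have castB : 2 * ((Tf.card : ℤ) * (q : ℤ) ^ e)
      ≤ 2 * (Γf.card : ℤ) + ((∑ f ∈ Γf, (d f * d f - d f) : ℕ) : ℤ) := by
    have := step2
    rw [← sum1'] at this
    exact_mod_cast this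
  have hq0 : (0 : ℤ) ≤ (q : ℤ) := Int.natCast_nonneg q
  rw [hTcard, hΓcard]
  have key : (q : ℤ) * (2 * ((Tf.card : ℤ) * (q : ℤ) ^ e))
      ≤ (q : ℤ) * (2 * (Γf.card : ℤ)) + (q : ℤ) ^ m * ((q : ℤ) * P) := by
    have h1 : (q : ℤ) * (2 * ((Tf.card : ℤ) * (q : ℤ) ^ e))
        ≤ (q : ℤ) * (2 * (Γf.card : ℤ) + ((∑ f ∈ Γf, (d f * d f - d f) : ℕ) : ℤ)) :=
      mul_le_mul_of_nonneg_left castB hq0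
    have h2 : (q : ℤ) * ((∑ f ∈ Γf, (d f * d f - d f) : ℕ) : ℤ)
        ≤ (q : ℤ) * ((q : ℤ) ^ m * P) := mul_le_mul_of_nonneg_left castA hq0
    nlinarith [h1, h2]
  have h3 : (q : ℤ) ^ m * ((q : ℤ) * P) ≤ (q : ℤ) ^ m * (((q : ℤ) - 1) * (Tf.card : ℤ) ^ 2) :=
    mul_le_mul_of_nonneg_left j5 (pow_nonneg hq0 m)
  nlinarith [key, h3]

end auxKT

/-- Right-to-left lossless expansion of the KT graph. -/
theorem stmt_1 {F : Type*} [Field F] [Fintype F] (q n s : ℕ)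
    (hq : Fintype.card F = q) (hsn : s + 1 ≤ n) (hchar : n ≤ ringChar F) :
    (∀ T : Set (F × (Fin (s + 1) → F)),
      2 * (q : ℤ) * (q : ℤ) ^ (n - (s + 1)) * (T.ncard : ℤ) -
          ((q : ℤ) - 1) * (q : ℤ) ^ (max (n - (2 * s + 2)) 0) * (T.ncard : ℤ) ^ 2 ≤
        2 * (q : ℤ) * (Set.ncard {f : F[X] | f.degree < n ∧ ∃ w ∈ T, KTAdj s f w} : ℤ)) ∧
    (∀ δ : ℝ, 0 < δ → δ < 1 →
      ∀ T : Set (F × (Fin (s + 1) → F)), (T.ncard : ℝ) ≤ δ * (q : ℝ) ^ (s + 1) →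
        (1 - (δ * ((q : ℝ) - 1) / (2 * (q : ℝ))) * (q : ℝ) ^ (max (2 * s + 2 - n) 0)) *
            (q : ℝ) ^ (n - (s + 1)) * (T.ncard : ℝ) ≤
          (Set.ncard {f : F[X] | f.degree < n ∧ ∃ w ∈ T, KTAdj s f w} : ℝ)) := by
  subst hq
  constructor
  · intro T
    rw [max_eq_left (Nat.zero_le _)]
    exact main_count hsn hchar T
  · intro δ hδ0 hδ1 T hTle
    rw [max_eq_left (Nat.zero_le _)]
    have h1 := main_count hsn hchar T
    set q : ℕ := Fintype.card F with hqdef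
    set e := n - (s + 1) with he
    set m1 := n - (2 * s + 2) with hm1
    set m2 := 2 * s + 2 - n with hm2
    set t : ℝ := (T.ncard : ℝ) with ht
    set G : ℝ := ((Set.ncard {f : F[X] | f.degree < n ∧ ∃ w ∈ T, KTAdj s f w} : ℕ) : ℝ) with hG
    have h1R := (Int.cast_le (R := ℝ)).mpr h1
    push_cast at h1R
    have hq1 : (1 : ℝ) ≤ (q : ℝ) := by
      exact_mod_cast Nat.one_le_iff_ne_zero.mpr (Fintype.card_ne_zero)
    have hqpos : (0 : ℝ) < (q : ℝ) := by linarith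
    have ht0 : 0 ≤ t := by positivity
    have key : (q : ℝ) ^ m1 * (q : ℝ) ^ (s + 1) = (q : ℝ) ^ m2 * (q : ℝ) ^ e := by
      rw [← pow_add, ← pow_add]
      congr 1
      omega
    have hb : ((q : ℝ) - 1) * (q : ℝ) ^ m1 * t ^ 2
        ≤ δ * ((q : ℝ) - 1) * (q : ℝ) ^ m2 * (q : ℝ) ^ e * t := by
      have hnn : 0 ≤ ((q : ℝ) - 1) * (q : ℝ) ^ m1 * t := by
        apply mul_nonneg (mul_nonneg (by linarith) (by positivity)) ht0
      calc ((q : ℝ) - 1) * (q : ℝ) ^ m1 * t ^ 2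
          = ((q : ℝ) - 1) * (q : ℝ) ^ m1 * t * t := by ring
        _ ≤ ((q : ℝ) - 1) * (q : ℝ) ^ m1 * t * (δ * (q : ℝ) ^ (s + 1)) :=
            mul_le_mul_of_nonneg_left hTle hnn
        _ = δ * ((q : ℝ) - 1) * ((q : ℝ) ^ m1 * (q : ℝ) ^ (s + 1)) * t := by ring
        _ = δ * ((q : ℝ) - 1) * (q : ℝ) ^ m2 * (q : ℝ) ^ e * t := by rw [key]; ring
    have h2 : 2 * (q : ℝ) *
        ((1 - (δ * ((q : ℝ) - 1) / (2 * (q : ℝ))) * (q : ℝ) ^ m2) * (q : ℝ) ^ e * t)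
        ≤ 2 * (q : ℝ) * G := by
      have expand : 2 * (q : ℝ) *
          ((1 - (δ * ((q : ℝ) - 1) / (2 * (q : ℝ))) * (q : ℝ) ^ m2) * (q : ℝ) ^ e * t)
          = 2 * (q : ℝ) * (q : ℝ) ^ e * t
            - δ * ((q : ℝ) - 1) * (q : ℝ) ^ m2 * (q : ℝ) ^ e * t := by
        field_simp
      rw [expand]
      linarith [h1R, hb]
    exact le_of_mul_le_mul_left h2 (by linarith)
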